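/- Let m, n ≥ 2, let k ∈ [0, n−1], and let G = C_n ⊕ C_{mn} (concretely ZMod n × ZMod (mn)). Let φ : G → C_n ⊕ C_n be the homomorphism φ(a, b) = (a, b mod n). Then every sequence S over G with |S| = mn+n−2+k admits a factorization S = W·W₁·…·W_{m−1} into subsequences such that 1 ≤ |Wᵢ| ≤ n and σ(φ(Wᵢ)) = 0 for every i ∈ [1, m−1]. -/

import Mathlib

open Multiset MvPolynomial

private lemma hlp_exists_le_card {α : Type*} (S : Multiset α) (k : ℕ) (h : k ≤ Multiset.card S) :
    ∃ T, T ≤ S ∧ Multiset.card T = k := by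
  refine ⟨(S.toList.take k : List α), ?_, ?_⟩
  · conv_rhs => rw [← S.coe_toList]
    exact Multiset.coe_le.2 (S.toList.take_sublist k).subperm
  · simp only [Multiset.coe_card, List.length_take]
    rw [Multiset.length_toList] at *
    omega

private lemma hlp_sum_le_sum {α : Type*} {s t : Multiset (Multiset α)} (h : s ≤ t) :
    s.sum ≤ t.sum := by
  obtain ⟨u, rfl⟩ := Multiset.le_iff_exists_add.1 h
  simp

private lemma hlp_map_sum_sum {β γ : Type*} [AddCommMonoid γ] (s : Multiset (Multiset β))
    (f : β → γ) : (s.sum.map f).sum = (s.map (fun m => (m.map f).sum)).sum := by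
  induction s using Multiset.induction with
  | empty => simp
  | cons a s ih => simp [ih]

private lemma hlp_card_sum {β : Type*} (s : Multiset (Multiset β)) :
    Multiset.card s.sum = (s.map (fun m => Multiset.card m)).sum := by
  induction s using Multiset.induction with
  | empty => simp
  | cons a s ih => simp [ih]

private lemma hlp_sum_map_le {β : Type*} (s : Multiset β) (f g : β → ℕ)
    (h : ∀ x ∈ s, f x ≤ g x) : (s.map f).sum ≤ (s.map g).sum := by
  induction s using Multiset.induction with
  | empty => simp
  | cons a s ih =>
    simp only [Multiset.map_cons, Multiset.sum_cons]
    exact Nat.add_le_add (h a (Multiset.mem_cons_self a s))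
      (ih fun x hx => h x (Multiset.mem_cons_of_mem hx))

private lemma cw_indexed (p : ℕ) [Fact p.Prime] {ι : Type} [Fintype ι] [DecidableEq ι]
    (r : ℕ) (g : Fin r → ι → ZMod p) (h : r * (p - 1) < Fintype.card ι) :
    ∃ T : Finset ι, T.Nonempty ∧ ∀ k, ∑ i ∈ T, g k i = 0 := by
  classical
  have hp1 : p - 1 ≠ 0 := by have := (Fact.out : p.Prime).two_le; omega
  set F : Fin r → MvPolynomial ι (ZMod p) := fun k => ∑ i, C (g k i) * X i ^ (p - 1) with hF
  have hdeg : ∀ k, (F k).totalDegree ≤ p - 1 := by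
    intro k
    refine totalDegree_finsetSum_le fun i _ => ?_
    calc (C (g k i) * X i ^ (p - 1)).totalDegree
        ≤ (C (g k i)).totalDegree + (X (R := ZMod p) i ^ (p - 1)).totalDegree :=
          totalDegree_mul _ _
      _ ≤ 0 + (p - 1) := by
          gcongr
          · exact le_of_eq (totalDegree_C _)
          · exact (totalDegree_X_pow _ _).le
      _ = p - 1 := zero_add _
  have hsum : ∑ k, (F k).totalDegree < Fintype.card ι := by
    calc ∑ k, (F k).totalDegree ≤ ∑ _k : Fin r, (p - 1) :=
          Finset.sum_le_sum fun k _ => hdeg k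
      _ = r * (p - 1) := by simp [Finset.sum_const, Finset.card_univ]
      _ < _ := h
  have hdvd := char_dvd_card_solutions_of_fintype_sum_lt p hsum
  have h0 : ∀ k, eval (0 : ι → ZMod p) (F k) = 0 := by
    intro k
    simp [hF, eval_sum, zero_pow hp1]
  have hne : Nonempty {x : ι → ZMod p // ∀ k, eval x (F k) = 0} := ⟨⟨0, h0⟩⟩
  have hdvd' : p ∣ Fintype.card {x : ι → ZMod p // ∀ k, eval x (F k) = 0} := by
    convert hdvd using 2
  have hge := Nat.le_of_dvd Fintype.card_pos hdvd'
  obtain ⟨x, hx⟩ := Fintype.exists_ne_of_one_lt_card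
    ((Fact.out : p.Prime).one_lt.trans_le hge) ⟨0, h0⟩
  have hxne : x.1 ≠ 0 := fun hh => hx (Subtype.ext hh)
  obtain ⟨i0, hi0⟩ := Function.ne_iff.1 hxne
  refine ⟨Finset.univ.filter (fun i => x.1 i ≠ 0), ⟨i0, by simpa using hi0⟩, fun k => ?_⟩
  have hk := x.2 k
  simp only [hF] at hk
  simp only [eval_sum, eval_mul, eval_C, eval_pow, eval_X] at hk
  calc ∑ i ∈ Finset.univ.filter (fun i => x.1 i ≠ 0), g k i
      = ∑ i : ι, g k i * x.1 i ^ (p - 1) := by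
        rw [Finset.sum_filter]
        refine Finset.sum_congr rfl fun i _ => ?_
        rw [ZMod.pow_card_sub_one]
        by_cases hxi : x.1 i = 0 <;> simp [hxi]
    _ = 0 := hk

private lemma cw_multiset (p : ℕ) [Fact p.Prime] {α : Type} (r : ℕ) (g : Fin r → α → ZMod p)
    (S : Multiset α) (h : r * (p - 1) < Multiset.card S) :
    ∃ T, T ≤ S ∧ T ≠ 0 ∧ ∀ k, ((T.map (g k)).sum = 0) := by
  classical
  obtain ⟨l, rfl⟩ : ∃ l : List α, (l : Multiset α) = S := ⟨S.toList, S.coe_toList⟩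
  have hcard : r * (p - 1) < Fintype.card (Fin l.length) := by simpa using h
  obtain ⟨T, hT0, hTs⟩ := cw_indexed p r (fun k i => g k (l.get i)) hcard
  have huniv : ((Finset.univ : Finset (Fin l.length)).val.map l.get) = (l : Multiset α) := by
    rw [Fin.univ_def]
    exact congrArg _ (List.map_get_finRange l)
  refine ⟨T.val.map l.get, ?_, ?_, fun k => ?_⟩
  · rw [← huniv]
    exact Multiset.map_le_map (Finset.val_le_iff.2 (Finset.subset_univ T))
  · simp only [ne_eq, Multiset.map_eq_zero]
    intro hT
    exact (Finset.nonempty_iff_ne_empty.1 hT0) (Finset.val_eq_zero.1 hT)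
  · rw [Multiset.map_map]
    exact hTs k

private lemma eta_prime (p : ℕ) [Fact p.Prime] {α : Type} (f₁ f₂ : α → ZMod p)
    (S : Multiset α) (hS : 3 * p ≤ Multiset.card S + 2) :
    ∃ T, T ≤ S ∧ T ≠ 0 ∧ Multiset.card T ≤ p ∧ (T.map f₁).sum = 0 ∧ (T.map f₂).sum = 0 := by
  classical
  have hp2 : 2 ≤ p := (Fact.out : p.Prime).two_le
  obtain ⟨S₀, hS₀S, hS₀c⟩ := hlp_exists_le_card S (3 * p - 2) (by omega)
  obtain ⟨T, hTS₀, hT0, hsums⟩ := cw_multiset p 3 ![f₁, f₂, fun _ => 1] S₀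
    (by rw [hS₀c]; omega)
  have h1 : (T.map f₁).sum = 0 := by simpa using hsums 0
  have h2 : (T.map f₂).sum = 0 := by simpa using hsums 1
  have h3 : ((Multiset.card T : ℕ) : ZMod p) = 0 := by
    have := hsums 2
    simpa [Multiset.map_const', Multiset.sum_replicate] using this
  have hdvd : p ∣ Multiset.card T := (ZMod.natCast_eq_zero_iff _ _).1 h3
  have hcT : Multiset.card T ≤ 3 * p - 2 := hS₀c ▸ Multiset.card_le_card hTS₀
  have hT1 : 1 ≤ Multiset.card T := Multiset.card_pos.2 hT0
  obtain ⟨c, hc⟩ := hdvd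
  have hcases : c = 1 ∨ c = 2 := by
    rcases Nat.lt_or_ge c 3 with h3c | h3c
    · interval_cases c
      · omega
      · exact Or.inl rfl
      · exact Or.inr rfl
    · exfalso
      have hle : 3 * p ≤ p * c := by
        calc 3 * p = p * 3 := mul_comm _ _
          _ ≤ p * c := Nat.mul_le_mul_left p h3c
      have : 3 * p ≤ 3 * p - 2 := le_trans hle (hc ▸ hcT)
      omega
  rcases hcases with rfl | rfl
  · exact ⟨T, le_trans hTS₀ hS₀S, hT0, by omega, h1, h2⟩
  · -- card T = 2 * p : split it
    obtain ⟨a, ha⟩ := Multiset.exists_mem_of_ne_zero hT0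
    have hcT₁ : Multiset.card (T.erase a) = 2 * p - 1 := by
      rw [Multiset.card_erase_of_mem ha, hc, Nat.pred_eq_sub_one]; omega
    obtain ⟨T', hT'T₁, hT'0, hsums'⟩ := cw_multiset p 2 ![f₁, f₂] (T.erase a)
      (by rw [hcT₁]; omega)
    have h1' : (T'.map f₁).sum = 0 := by simpa using hsums' 0
    have h2' : (T'.map f₂).sum = 0 := by simpa using hsums' 1
    have hT'T : T' ≤ T := le_trans hT'T₁ (Multiset.erase_le a T)
    have hcT' : Multiset.card T' ≤ 2 * p - 1 := hcT₁ ▸ Multiset.card_le_card hT'T₁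
    have hT'1 : 1 ≤ Multiset.card T' := Multiset.card_pos.2 hT'0
    have hkey : (T - T') + T' = T := tsub_add_cancel_of_le hT'T
    have hcT'' : Multiset.card (T - T') = 2 * p - Multiset.card T' := by
      rw [Multiset.card_sub hT'T, hc]; ring_nf
    have hsub1 : ((T - T').map f₁).sum = 0 := by
      have := congrArg (fun s => (s.map f₁).sum) hkey
      simp only [Multiset.map_add, Multiset.sum_add] at this
      rw [h1, h1'] at this
      simpa using this
    have hsub2 : ((T - T').map f₂).sum = 0 := by
      have := congrArg (fun s => (s.map f₂).sum) hkey
      simp only [Multiset.map_add, Multiset.sum_add] at this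
      rw [h2, h2'] at this
      simpa using this
    by_cases hsmall : Multiset.card T' ≤ p
    · exact ⟨T', le_trans hT'T (le_trans hTS₀ hS₀S), hT'0, hsmall, h1', h2'⟩
    · refine ⟨T - T', le_trans (tsub_le_self) (le_trans hTS₀ hS₀S), ?_, by omega, hsub1, hsub2⟩
      rw [← Multiset.card_pos]
      omega

private lemma blocks {α : Type} {n : ℕ} (f₁ f₂ : α → ZMod n)
    (hext : ∀ S : Multiset α, 3 * n ≤ Multiset.card S + 2 →
      ∃ T, T ≤ S ∧ T ≠ 0 ∧ Multiset.card T ≤ n ∧ (T.map f₁).sum = 0 ∧ (T.map f₂).sum = 0) :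
    ∀ (t : ℕ) (S : Multiset α), t * n + 3 * n ≤ Multiset.card S + 2 →
      ∃ B : Fin (t + 1) → Multiset α, (∑ j, B j) ≤ S ∧
        ∀ j, B j ≠ 0 ∧ Multiset.card (B j) ≤ n ∧
          ((B j).map f₁).sum = 0 ∧ ((B j).map f₂).sum = 0 := by
  classical
  intro t
  induction t with
  | zero =>
    intro S hS
    obtain ⟨T, hTS, hT0, hTc, h1, h2⟩ := hext S (by omega)
    exact ⟨fun _ => T, by simpa using hTS, fun j => ⟨hT0, hTc, h1, h2⟩⟩
  | succ t ih =>
    intro S hS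
    obtain ⟨T, hTS, hT0, hTc, h1, h2⟩ := hext S (by omega)
    have hcard : t * n + 3 * n ≤ Multiset.card (S - T) + 2 := by
      rw [Multiset.card_sub hTS]
      have hrn : (t + 1) * n = t * n + n := by ring
      have h1c : Multiset.card T ≤ Multiset.card S := Multiset.card_le_card hTS
      omega
    obtain ⟨B, hBle, hBprop⟩ := ih (S - T) hcard
    refine ⟨Fin.cases T B, ?_, ?_⟩
    · rw [Fin.sum_univ_succ]
      simp only [Fin.cases_zero, Fin.cases_succ]
      calc T + ∑ j : Fin (t + 1), B j ≤ T + (S - T) := by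
            exact add_le_add_right hBle T
        _ = S := add_tsub_cancel_of_le hTS
    · intro j
      refine Fin.cases ?_ ?_ j
      · simpa using ⟨hT0, hTc, h1, h2⟩
      · intro i
        simpa using hBprop i

private def EtaProp (n : ℕ) : Prop :=
  ∀ {α : Type} (f₁ f₂ : α → ZMod n) (S : Multiset α), 3 * n ≤ Multiset.card S + 2 →
    ∃ T, T ≤ S ∧ T ≠ 0 ∧ Multiset.card T ≤ n ∧ (T.map f₁).sum = 0 ∧ (T.map f₂).sum = 0

private lemma eta_composite {a b : ℕ} (ha : 2 ≤ a) (hb : 2 ≤ b)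
    (Ea : EtaProp a) (Eb : EtaProp b) : EtaProp (a * b) := by
  intro α f₁ f₂ S hS
  haveI : NeZero (a * b) := ⟨by positivity⟩
  haveI : NeZero b := ⟨by omega⟩
  set g₁ : α → ZMod a := fun x => ZMod.castHom (dvd_mul_right a b) (ZMod a) (f₁ x) with hg₁
  set g₂ : α → ZMod a := fun x => ZMod.castHom (dvd_mul_right a b) (ZMod a) (f₂ x) with hg₂
  obtain ⟨b', rfl⟩ : ∃ b', b = 2 + b' := ⟨b - 2, by omega⟩
  obtain ⟨B, hBle, hBprop⟩ := blocks g₁ g₂ (fun S' h' => Ea g₁ g₂ S' h') (3 * b' + 3) S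
    (by
      have h2 : (3 * b' + 3) * a + 3 * a = 3 * (a * (2 + b')) := by ring
      rw [h2]; exact hS)
  -- the sums of the blocks, divisibility
  have hdvd : ∀ j : Fin (3 * b' + 3 + 1), a ∣ (((B j).map f₁).sum).val ∧ a ∣ (((B j).map f₂).sum).val := by
    intro j
    constructor
    · have h0 : ((B j).map g₁).sum = 0 := (hBprop j).2.2.1
      have hc : (ZMod.castHom (dvd_mul_right a (2 + b')) (ZMod a)) (((B j).map f₁).sum)
          = ((B j).map g₁).sum := by
        rw [map_multiset_sum, Multiset.map_map]
        rfl
      rw [h0] at hc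
      rw [ZMod.castHom_apply, ← ZMod.natCast_val] at hc
      exact (ZMod.natCast_eq_zero_iff _ _).1 hc
    · have h0 : ((B j).map g₂).sum = 0 := (hBprop j).2.2.2
      have hc : (ZMod.castHom (dvd_mul_right a (2 + b')) (ZMod a)) (((B j).map f₂).sum)
          = ((B j).map g₂).sum := by
        rw [map_multiset_sum, Multiset.map_map]
        rfl
      rw [h0] at hc
      rw [ZMod.castHom_apply, ← ZMod.natCast_val] at hc
      exact (ZMod.natCast_eq_zero_iff _ _).1 hc
  set u₁ : Fin (3 * b' + 3 + 1) → ℕ := fun j => (((B j).map f₁).sum).val / a with hu₁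
  set u₂ : Fin (3 * b' + 3 + 1) → ℕ := fun j => (((B j).map f₂).sum).val / a with hu₂
  have hu₁e : ∀ j, (((B j).map f₁).sum).val = a * u₁ j :=
    fun j => (Nat.mul_div_cancel' (hdvd j).1).symm
  have hu₂e : ∀ j, (((B j).map f₂).sum).val = a * u₂ j :=
    fun j => (Nat.mul_div_cancel' (hdvd j).2).symm
  set c₁ : Fin (3 * b' + 3 + 1) → ZMod (2 + b') := fun j => ((u₁ j : ℕ) : ZMod (2 + b')) with hc₁
  set c₂ : Fin (3 * b' + 3 + 1) → ZMod (2 + b') := fun j => ((u₂ j : ℕ) : ZMod (2 + b')) with hc₂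
  have hcarduniv : Multiset.card (Finset.univ.val : Multiset (Fin (3 * b' + 3 + 1)))
      = 3 * b' + 3 + 1 := by simp
  obtain ⟨T, hTuniv, hT0, hTb, hs1, hs2⟩ := Eb c₁ c₂
    (Finset.univ.val : Multiset (Fin (3 * b' + 3 + 1))) (by rw [hcarduniv]; omega)
  refine ⟨(T.map B).sum, ?_, ?_, ?_, ?_, ?_⟩
  · calc (T.map B).sum ≤ ((Finset.univ.val : Multiset (Fin (3 * b' + 3 + 1))).map B).sum :=
        hlp_sum_le_sum (Multiset.map_le_map hTuniv)
      _ = ∑ j, B j := rfl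
      _ ≤ S := hBle
  · -- nonzero via card
    have hge : Multiset.card T ≤ Multiset.card ((T.map B).sum) := by
      rw [hlp_card_sum, Multiset.map_map]
      calc Multiset.card T = (T.map (fun _ => 1)).sum := by
            simp [Multiset.map_const', Multiset.sum_replicate]
        _ ≤ (T.map (fun j => Multiset.card (B j))).sum := by
            refine hlp_sum_map_le T _ _ fun j _ => ?_
            exact Multiset.card_pos.2 (hBprop j).1
        _ = _ := rfl
    have h1 : 1 ≤ Multiset.card T := Multiset.card_pos.2 hT0
    rw [← Multiset.card_pos]
    omega
  · -- card bound
    rw [hlp_card_sum, Multiset.map_map]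
    calc (T.map (fun j => Multiset.card (B j))).sum
        ≤ (T.map (fun _ => a)).sum := by
          refine hlp_sum_map_le T _ _ fun j _ => ?_
          exact (hBprop j).2.1
      _ = Multiset.card T * a := by simp [Multiset.map_const', Multiset.sum_replicate,
            smul_eq_mul]
      _ ≤ (2 + b') * a := Nat.mul_le_mul_right a hTb
      _ = a * (2 + b') := mul_comm _ _
  · -- first sum
    rw [hlp_map_sum_sum, Multiset.map_map]
    simp only [Function.comp_def]
    have hb' : (2 + b') ∣ (T.map u₁).sum := by
      have : ((T.map u₁).sum : ZMod (2 + b')) = (T.map c₁).sum := by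
        rw [Nat.cast_multiset_sum, Multiset.map_map]
        rfl
      rw [hs1] at this
      exact (ZMod.natCast_eq_zero_iff _ _).1 this
    obtain ⟨w, hw⟩ := hb'
    have : (T.map (fun j => ((B j).map f₁).sum)).sum
        = (((T.map (fun j => a * u₁ j)).sum : ℕ) : ZMod (a * (2 + b'))) := by
      rw [Nat.cast_multiset_sum, Multiset.map_map]
      refine congrArg Multiset.sum (Multiset.map_congr rfl fun j _ => ?_)
      simp only [Function.comp_apply]
      rw [← hu₁e j, ZMod.natCast_val, ZMod.cast_id]
    rw [this, Multiset.sum_map_mul_left, hw]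
    rw [ZMod.natCast_eq_zero_iff]
    exact ⟨w, by ring⟩
  · -- second sum
    rw [hlp_map_sum_sum, Multiset.map_map]
    simp only [Function.comp_def]
    have hb' : (2 + b') ∣ (T.map u₂).sum := by
      have : ((T.map u₂).sum : ZMod (2 + b')) = (T.map c₂).sum := by
        rw [Nat.cast_multiset_sum, Multiset.map_map]
        rfl
      rw [hs2] at this
      exact (ZMod.natCast_eq_zero_iff _ _).1 this
    obtain ⟨w, hw⟩ := hb'
    have : (T.map (fun j => ((B j).map f₂).sum)).sum
        = (((T.map (fun j => a * u₂ j)).sum : ℕ) : ZMod (a * (2 + b'))) := by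
      rw [Nat.cast_multiset_sum, Multiset.map_map]
      refine congrArg Multiset.sum (Multiset.map_congr rfl fun j _ => ?_)
      simp only [Function.comp_apply]
      rw [← hu₂e j, ZMod.natCast_val, ZMod.cast_id]
    rw [this, Multiset.sum_map_mul_left, hw]
    rw [ZMod.natCast_eq_zero_iff]
    exact ⟨w, by ring⟩

private lemma eta (n : ℕ) (hn : 1 ≤ n) : EtaProp n := by
  have key : ∀ m : ℕ, m = 0 ∨ EtaProp m := by
    intro m
    induction m using Nat.prime_composite_induction with
    | zero => exact Or.inl rfl
    | one =>
      refine Or.inr ?_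
      intro α f₁ f₂ S hS
      have hS0 : S ≠ 0 := by
        rw [← Multiset.card_pos]; omega
      obtain ⟨x, hx⟩ := Multiset.exists_mem_of_ne_zero hS0
      refine ⟨{x}, Multiset.singleton_le.2 hx, by simp, by simp, ?_, ?_⟩ <;>
        exact Subsingleton.elim _ _
    | prime p hp =>
      haveI := Fact.mk hp
      exact Or.inr fun f₁ f₂ S hS => eta_prime p f₁ f₂ S hS
    | composite a ha iha b hb ihb =>
      refine Or.inr (eta_composite ha hb ?_ ?_)
      · exact iha.resolve_left (by omega)
      · exact ihb.resolve_left (by omega)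
  rcases key n with h | h
  · omega
  · intro α f₁ f₂ S hS
    exact h f₁ f₂ S hS

private lemma hlp_sum_pair {α β γ : Type*} [AddCommMonoid β] [AddCommMonoid γ]
    (s : Multiset α) (φ : α → β × γ) :
    (s.map φ).sum = ((s.map fun x => (φ x).1).sum, (s.map fun x => (φ x).2).sum) := by
  induction s using Multiset.induction with
  | empty => simp; rfl
  | cons a s ih => simp [ih, Prod.ext_iff]

theorem stmt_17 (m n k : ℕ) (hm : 2 ≤ m) (hn : 2 ≤ n) (hk : k ≤ n - 1)
    (φ : ZMod n × ZMod (m * n) → ZMod n × ZMod n)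
    (hφ : φ = fun p => (p.1, ZMod.castHom (dvd_mul_left n m) (ZMod n) p.2))
    (S : Multiset (ZMod n × ZMod (m * n)))
    (hS : Multiset.card S = m * n + n - 2 + k) :
    ∃ (W : Multiset (ZMod n × ZMod (m * n)))
      (Wf : Fin (m - 1) → Multiset (ZMod n × ZMod (m * n))),
      S = W + ∑ i, Wf i ∧
      ∀ i, 1 ≤ Multiset.card (Wf i) ∧ Multiset.card (Wf i) ≤ n ∧
        ((Wf i).map φ).sum = 0 := by
  classical
  obtain ⟨m', rfl⟩ : ∃ m', m = m' + 2 := ⟨m - 2, by omega⟩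
  set f₁ : ZMod n × ZMod ((m' + 2) * n) → ZMod n := fun x => (φ x).1 with hf₁
  set f₂ : ZMod n × ZMod ((m' + 2) * n) → ZMod n := fun x => (φ x).2 with hf₂
  obtain ⟨B, hBle, hBprop⟩ := blocks f₁ f₂ (fun S' h' => eta n (by omega) f₁ f₂ S' h') m' S
    (by
      have he : (m' + 2) * n + n = m' * n + 3 * n := by ring
      have h2 : 2 ≤ (m' + 2) * n + n := by
        have : 2 ≤ n := hn
        nlinarith
      omega)
  refine ⟨S - ∑ j, B j, B, (tsub_add_cancel_of_le hBle).symm, fun i => ?_⟩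
  obtain ⟨h0, hc, h1, h2⟩ := hBprop i
  refine ⟨Multiset.card_pos.2 h0, hc, ?_⟩
  rw [hlp_sum_pair]
  rw [show (fun x => (φ x).1) = f₁ from rfl, show (fun x => (φ x).2) = f₂ from rfl, h1, h2]
  rfl
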